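/- Let 𝒟 be a division algebra of degree n over a totally complex number field F of degree 2k, Γ a ℤ-order in 𝒟, ψ the multi-block embedding ψ(a) = (α₁(φ(a));…;α_k(φ(a))) ∈ M_{nk×n}(ℂ), and Γ^∨ = {x ∈ 𝒟 : tr_{𝒟/ℚ}(xΓ) ⊆ ℤ} the codifferent. Then the dual of the matrix lattice ψ(Γ) with respect to the inner product ⟨X,Y⟩ = Re Tr(X†Y) equals 2·ψ(Γ^∨)^h, where for a block matrix X = (X₁;…;X_k), X^h = (X₁†;…;X_k†). -/

import Mathlib

open Matrix

/-- Real inner product `⟨X,Y⟩ = Re Tr(X†Y)` on block matrices `M_{nk×n}(ℂ)`,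
represented as `k`-tuples of `n×n` blocks. -/
noncomputable def blockInner {n k : ℕ} (X Y : Fin k → Matrix (Fin n) (Fin n) ℂ) : ℝ :=
  (∑ i, Matrix.trace ((X i)ᴴ * Y i)).re

noncomputable def blockInnerL {n k : ℕ} (X : Fin k → Matrix (Fin n) (Fin n) ℂ) :
    (Fin k → Matrix (Fin n) (Fin n) ℂ) →ₗ[ℝ] ℝ where
  toFun Y := blockInner X Y
  map_add' Y Z := by
    simp [blockInner, Matrix.mul_add, Matrix.trace_add, Finset.sum_add_distrib]
  map_smul' r Y := by
    simp [blockInner, Matrix.mul_smul, Complex.real_smul, Finset.mul_sum]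

lemma blockInner_self_eq_zero {n k : ℕ} (X : Fin k → Matrix (Fin n) (Fin n) ℂ)
    (h : blockInner X X = 0) : X = 0 := by
  have : blockInner X X = ∑ i, ∑ p, ∑ q, Complex.normSq (X i q p) := by
    simp [blockInner, Matrix.trace, Matrix.diag, Matrix.mul_apply, Matrix.conjTranspose_apply,
      Complex.normSq_eq_conj_mul_self, Complex.normSq_apply]
  rw [this] at h
  funext i; ext p q
  have h1 : ∀ i ∈ Finset.univ, (0:ℝ) ≤ ∑ p, ∑ q, Complex.normSq (X i q p) :=
    fun i _ => Finset.sum_nonneg fun _ _ => Finset.sum_nonneg fun _ _ => Complex.normSq_nonneg _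
  have h2 := (Finset.sum_eq_zero_iff_of_nonneg h1).mp h i (Finset.mem_univ i)
  have h3 : ∀ p ∈ Finset.univ, (0:ℝ) ≤ ∑ q, Complex.normSq (X i q p) :=
    fun p _ => Finset.sum_nonneg fun _ _ => Complex.normSq_nonneg _
  have h4 := (Finset.sum_eq_zero_iff_of_nonneg h3).mp h2 q (Finset.mem_univ q)
  have h5 := (Finset.sum_eq_zero_iff_of_nonneg (fun q _ => Complex.normSq_nonneg _)).mp h4 p
    (Finset.mem_univ p)
  simpa [Complex.normSq_eq_zero] using h5

lemma blockInner_sub_left {n k : ℕ} (X X' Y : Fin k → Matrix (Fin n) (Fin n) ℂ) :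
    blockInner (X - X') Y = blockInner X Y - blockInner X' Y := by
  simp [blockInner, Matrix.conjTranspose_sub, Matrix.sub_mul, Matrix.trace_sub,
    Finset.sum_sub_distrib]

/-- Dual of the matrix lattice `ψ(Γ)` of a `ℤ`-order `Γ` in a division algebra `D`
over ℚ (of dimension `2n²k`): with respect to `⟨X,Y⟩ = Re Tr(X†Y)` it equals
`2·ψ(Γ^∨)^h`, where `Γ^∨` is the codifferent of the reduced trace form and
`X^h` takes blockwise conjugate transposes. -/
theorem dual_matrix_lattice_eq_codifferent {n k : ℕ} (hn : 0 < n) (hk : 0 < k)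
    {D : Type*} [DivisionRing D] [Algebra ℚ D]
    [FiniteDimensional ℚ D] (hdim : Module.finrank ℚ D = 2 * n ^ 2 * k)
    -- the multi-block embedding `ψ(a) = (α₁(φ(a));…;α_k(φ(a)))`
    (ψ : D →ₗ[ℚ] (Fin k → Matrix (Fin n) (Fin n) ℂ))
    (hψinj : Function.Injective ψ)
    (hψmul : ∀ x y : D, ∀ i, ψ (x * y) i = ψ x i * ψ y i)
    (hψspan : Submodule.span ℝ (Set.range ψ) = ⊤)
    -- the reduced trace `tr_{D/ℚ}` and its key identity
    (tr : D →ₗ[ℚ] ℚ)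
    (htr : ∀ x y : D, ((tr (x * y) : ℚ) : ℝ) = 2 * (∑ i, Matrix.trace (ψ x i * ψ y i)).re)
    (htrnd : ∀ x : D, x ≠ 0 → ∃ y : D, tr (x * y) ≠ 0)
    -- `Γ` is a `ℤ`-order in `D`
    (Γ : Submodule ℤ D) (hΓfg : Γ.FG) (hΓone : (1 : D) ∈ Γ)
    (hΓmul : ∀ a ∈ Γ, ∀ b ∈ Γ, a * b ∈ Γ)
    (hΓspan : Submodule.span ℚ (Γ : Set D) = ⊤)
    -- `Γ^∨` is the codifferent
    (codiff : Set D)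
    (hcodiff : codiff = {x : D | ∀ γ ∈ Γ, ∃ m : ℤ, tr (x * γ) = m}) :
    {Y : Fin k → Matrix (Fin n) (Fin n) ℂ | ∀ a ∈ Γ, ∃ m : ℤ, blockInner Y (ψ a) = m} =
      {Y | ∃ x ∈ codiff, Y = fun i => (2 : ℂ) • (ψ x i)ᴴ} := by
  -- key identity
  have hkey : ∀ x a : D,
      blockInner (fun i => (2 : ℂ) • (ψ x i)ᴴ) (ψ a) = ((tr (x * a) : ℚ) : ℝ) := by
    intro x a
    have : ∀ i, ((fun i => (2 : ℂ) • (ψ x i)ᴴ) i)ᴴ * ψ a i = (2:ℂ) • (ψ x i * ψ a i) := by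
      intro i
      simp [Matrix.conjTranspose_smul, Matrix.smul_mul]
    rw [htr]
    simp only [blockInner, this, Matrix.trace_smul, ← Finset.smul_sum]
    rw [smul_eq_mul, Complex.mul_re]
    norm_num
  ext Y
  simp only [Set.mem_setOf_eq]
  constructor
  · intro hY
    -- free ℤ-basis of Γ
    haveI : Module.Finite ℤ Γ := Module.Finite.iff_fg.mpr hΓfg
    haveI : NoZeroSMulDivisors ℤ D := by
      constructor
      intro c v h
      rcases eq_or_ne c 0 with rfl | hc
      · exact Or.inl rfl
      · refine Or.inr ?_
        have : ((c : ℚ)) • v = 0 := by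
          rw [Int.cast_smul_eq_zsmul]; exact h
        have hc' : (c : ℚ) ≠ 0 := Int.cast_ne_zero.mpr hc
        simpa [hc'] using this
    haveI : NoZeroSMulDivisors ℤ Γ :=
      Function.Injective.noZeroSMulDivisors _ Subtype.val_injective rfl (fun _ _ => rfl)
    haveI : Module.Free ℤ Γ := Module.free_of_finite_type_torsion_free'
    let ι := Module.Free.ChooseBasisIndex ℤ Γ
    let bΓ : Module.Basis ι ℤ Γ := Module.Free.chooseBasis ℤ Γ
    let e : ι → D := fun j => (bΓ j : D)
    have heΓ : ∀ j, e j ∈ Γ := fun j => (bΓ j).2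
    -- linear independence over ℚ
    have liZ : LinearIndependent ℤ e := by
      have := bΓ.linearIndependent
      exact this.map' Γ.subtype (Submodule.ker_subtype Γ)
    have liQ : LinearIndependent ℚ e := (LinearIndependent.iff_fractionRing ℤ ℚ).mp liZ
    -- span over ℚ
    have hspanZ : Submodule.span ℤ (Set.range e) = Γ := by
      have : Set.range e = Γ.subtype '' Set.range bΓ := by
        rw [← Set.range_comp]; rfl
      rw [this, ← Submodule.map_span, bΓ.span_eq, Submodule.map_top, Submodule.range_subtype]
    have hspanQ : Submodule.span ℚ (Set.range e) = ⊤ := by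
      rw [← top_le_iff, ← hΓspan]
      apply Submodule.span_le.mpr
      intro γ hγ
      have : γ ∈ Submodule.span ℤ (Set.range e) := hspanZ ▸ hγ
      exact Submodule.span_subset_span ℤ ℚ _ this
    let bD : Module.Basis ι ℚ D := Module.Basis.mk liQ (by rw [hspanQ])
    have hbD : ∀ j, bD j = e j := fun j => by simp [bD, Module.Basis.mk_apply]
    -- the trace bilinear form
    let B : LinearMap.BilinForm ℚ D :=
      LinearMap.mk₂ ℚ (fun x y => tr (x * y))
        (fun x x' y => by simp [add_mul])
        (fun c x y => by simp [smul_mul_assoc])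
        (fun x y y' => by simp [mul_add])
        (fun c x y => by simp [mul_smul_comm])
    have hB : B.Nondegenerate := by
      refine LinearMap.BilinForm.Nondegenerate.ofSeparatingLeft ?_
      intro x hx
      by_contra hx0
      obtain ⟨y, hy⟩ := htrnd x hx0
      exact hy (hx y)
    let f : ι → D := fun j => B.dualBasis hB bD j
    -- integers m j
    have hmex : ∀ j : ι, ∃ m : ℤ, blockInner Y (ψ (e j)) = m := fun j => hY (e j) (heΓ j)
    choose m hm using hmex
    -- the candidate x
    set x : D := ∑ j, (m j : ℚ) • f j with hxdef
    have htrx : ∀ j, tr (x * e j) = (m j : ℚ) := by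
      intro j
      have : tr (x * e j) = B x (e j) := rfl
      rw [this, hxdef]
      rw [map_sum, LinearMap.sum_apply]
      have : ∀ i, B ((m i : ℚ) • f i) (e j) = (m i : ℚ) * (if j = i then 1 else 0) := by
        intro i
        rw [← hbD j, LinearMap.map_smul₂]
        rw [show f i = B.dualBasis hB bD i from rfl, B.apply_dualBasis_left hB bD]
        simp
      simp only [this]
      simp
    -- x is in the codifferent
    have hxcd : x ∈ codiff := by
      rw [hcodiff]
      intro γ hγ
      obtain ⟨c, hγrep⟩ : ∃ c : ι → ℤ, γ = ∑ j, c j • e j := by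
        refine ⟨fun j => bΓ.repr ⟨γ, hγ⟩ j, ?_⟩
        have h := bΓ.sum_repr ⟨γ, hγ⟩
        calc γ = ((⟨γ, hγ⟩ : Γ) : D) := rfl
        _ = ((∑ j, bΓ.repr ⟨γ, hγ⟩ j • bΓ j : Γ) : D) := by rw [h]
        _ = ∑ j, (bΓ.repr ⟨γ, hγ⟩ j) • e j := by
            push_cast [Submodule.coe_sum]
            rfl
      refine ⟨∑ j, c j * m j, ?_⟩
      rw [hγrep, Finset.mul_sum, map_sum]
      push_cast
      apply Finset.sum_congr rfl
      intro j _
      rw [mul_smul_comm, map_zsmul, htrx j]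
      simp [zsmul_eq_mul]
  -- Y agrees with 2 ψ(x)^h against all lattice vectors
    refine ⟨x, hxcd, ?_⟩
    set Y' : Fin k → Matrix (Fin n) (Fin n) ℂ := fun i => (2 : ℂ) • (ψ x i)ᴴ with hY'
    have hZj : ∀ j, blockInnerL (Y - Y') (ψ (e j)) = 0 := by
      intro j
      show blockInner (Y - Y') (ψ (e j)) = 0
      rw [blockInner_sub_left, hm j, hY', hkey x (e j), htrx j]
      simp
    -- span argument
    have hS : Submodule.span ℝ (Set.range fun j => ψ (e j)) = ⊤ := by
      rw [← top_le_iff, ← hψspan]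
      apply Submodule.span_le.mpr
      rintro _ ⟨a, rfl⟩
      have h1 : ψ a ∈ Submodule.span ℚ (ψ '' Set.range e) := by
        rw [← Submodule.map_span, hspanQ]
        exact Submodule.mem_map_of_mem trivial
      have h2 : Submodule.span ℚ (ψ '' Set.range e) ≤
          (Submodule.span ℝ (Set.range fun j => ψ (e j))).restrictScalars ℚ := by
        apply Submodule.span_le.mpr
        rintro _ ⟨_, ⟨j, rfl⟩, rfl⟩
        exact Submodule.subset_span ⟨j, rfl⟩
      exact h2 h1
    have hZ : blockInnerL (Y - Y') = 0 := by
      apply LinearMap.ext_on hS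
      rintro _ ⟨j, rfl⟩
      exact hZj j
    have : Y - Y' = 0 := by
      apply blockInner_self_eq_zero
      have h0 := LinearMap.congr_fun hZ (Y - Y')
      simp only [LinearMap.zero_apply] at h0; exact h0
    have := sub_eq_zero.mp this
    exact this
  · rintro ⟨x, hx, rfl⟩ a ha
    rw [hcodiff] at hx
    obtain ⟨mm, hmm⟩ := hx a ha
    exact ⟨mm, by rw [hkey, hmm]; push_cast; ring⟩
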